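/- Let V be a finite set, s ∈ V, and let v : V → ℝ and d : V → ℝ be functions with d_x > 0 for all x, v_s = R_s > 0, and set ET_s := (1/R_s) Σ_{x∈V} v_x² d_x. Fix η ≥ 1 and define the modified quantities: R̂_σ := R_s + 1/(η d_s), d̂_σ := η d_s, d̂_s := (1+η) d_s, d̂_x := d_x for x ∉ {s}, v̂_σ := R̂_σ, v̂_x := v_x for x ∈ V, and ÊT_σ := (1/R̂_σ)( v̂_σ² d̂_σ + Σ_{x∈V} v̂_x² d̂_x ). Then R̂_σ d̂_σ = 1 + η R_s d_s and ÊT_σ/(R̂_σ d̂_σ) ≤ 2 + ET_s/(η R_s d_s). -/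

import Mathlib

lemma stmt10_aux (S R Rσ D η : ℝ) (hS : 0 ≤ S) (hR : 0 < R) (hD : 0 < D) (hη0 : 0 < η)
    (hRσpos : 0 < Rσ) (hRσgt : R ≤ Rσ) :
    Rσ⁻¹ * (Rσ ^ 2 * (η * D) + (S + η * (R ^ 2 * D))) / (Rσ * (η * D))
      ≤ 2 + R⁻¹ * S / (η * (R * D)) := by
  have hA : Rσ⁻¹ * (Rσ ^ 2 * (η * D) + (S + η * (R ^ 2 * D))) / (Rσ * (η * D))
      = (Rσ ^ 2 * (η * D) + (S + η * (R ^ 2 * D))) / (Rσ ^ 2 * (η * D)) := by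
    rw [div_eq_div_iff (by positivity) (by positivity)]
    field_simp
  have hB : R⁻¹ * S / (η * (R * D)) = S / (η * R ^ 2 * D) := by
    rw [div_eq_div_iff (by positivity) (by positivity)]
    field_simp
  rw [hA, hB, div_le_iff₀ (by positivity), add_mul, div_mul_eq_mul_div,
    ← sub_le_iff_le_add', le_div_iff₀ (by positivity)]
  have key : R ^ 2 ≤ Rσ ^ 2 := by nlinarith
  nlinarith [mul_nonneg (mul_nonneg (sq_nonneg (η*D)) (sq_nonneg R)) (sub_nonneg.mpr key),
    mul_nonneg (mul_nonneg hS (le_of_lt (mul_pos hη0 hD))) (sub_nonneg.mpr key)]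

/-- Escape-time bound for the modified graph: with `R̂_σ = R_s + 1/(η d_s)`,
`d̂_σ = η d_s`, `d̂_s = (1+η) d_s`, we have `R̂_σ d̂_σ = 1 + η R_s d_s` and
`ÊT_σ/(R̂_σ d̂_σ) ≤ 2 + ET_s/(η R_s d_s)`. -/
theorem stmt10 {V : Type*} [Fintype V] [DecidableEq V] (s : V) (v d : V → ℝ)
    (hd : ∀ x, 0 < d x) (hR : 0 < v s) (η : ℝ) (hη : 1 ≤ η)
    (Rσ : ℝ) (hRσ : Rσ = v s + 1 / (η * d s))
    (dσ : ℝ) (hdσ : dσ = η * d s)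
    (dhat : V → ℝ) (hdhat : dhat = fun x => if x = s then (1 + η) * d x else d x)
    (vhatσ : ℝ) (hvhatσ : vhatσ = Rσ)
    (ET ETσ : ℝ)
    (hET : ET = (v s)⁻¹ * ∑ x, v x ^ 2 * d x)
    (hETσ : ETσ = Rσ⁻¹ * (vhatσ ^ 2 * dσ + ∑ x, v x ^ 2 * dhat x)) :
    Rσ * dσ = 1 + η * (v s * d s) ∧
    ETσ / (Rσ * dσ) ≤ 2 + ET / (η * (v s * d s)) := by
  have hη0 : (0:ℝ) < η := lt_of_lt_of_le one_pos hη
  have hds : 0 < d s := hd s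
  have hηd : 0 < η * d s := mul_pos hη0 hds
  have hsum : ∑ x, v x ^ 2 * dhat x
      = (∑ x, v x ^ 2 * d x) + η * (v s ^ 2 * d s) := by
    subst hdhat
    have h : ∀ x : V, v x ^ 2 * (if x = s then (1 + η) * d x else d x)
        = v x ^ 2 * d x + (if x = s then η * (v x ^ 2 * d x) else 0) := by
      intro x; split <;> ring
    simp only [h, Finset.sum_add_distrib]
    rw [Finset.sum_ite_eq' Finset.univ s (fun x => η * (v x ^ 2 * d x))]
    simp
  have hS : 0 ≤ ∑ x, v x ^ 2 * d x :=
    Finset.sum_nonneg fun x _ => mul_nonneg (sq_nonneg _) (hd x).le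
  have hRσpos : 0 < Rσ := by rw [hRσ]; positivity
  have hRσgt : v s ≤ Rσ := by
    rw [hRσ]; nlinarith [one_div_pos.mpr hηd]
  constructor
  · rw [hRσ, hdσ]; field_simp; ring
  · rw [hETσ, hvhatσ, hsum, hET, hdσ]
    exact stmt10_aux _ _ _ _ _ hS hR hds hη0 hRσpos hRσgt
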